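/- Under statistical QoS constraints with a constant-rate source, the minimum energy per bit for confidential message transmission to receiver 1 satisfies lim_{snr→0⁺} (δ·P(z1 ≥ z2)·snr)/C_E1(snr) = P(z1 ≥ z2)·log_e 2 / E[(z1 − z2)·1{z1 ≥ z2}]. -/

import Mathlib

open MeasureTheory ProbabilityTheory Filter Set

lemma aux_hasDerivAt (c δ a b : ℝ) :
    HasDerivAt (fun s : ℝ => Real.exp (c * Real.log (1 + δ * s * b) - c * Real.log (1 + δ * s * a)))
      (c * (δ * b) - c * (δ * a)) 0 := by
  have hlin : ∀ z : ℝ, HasDerivAt (fun s : ℝ => 1 + δ * s * z) (δ * z) 0 := by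
    intro z
    have h := ((hasDerivAt_id (0:ℝ)).const_mul (δ * z)).const_add 1
    simpa [mul_assoc, mul_comm, mul_left_comm] using h.congr_deriv (by ring)
  have hlog : ∀ z : ℝ, HasDerivAt (fun s : ℝ => Real.log (1 + δ * s * z)) (δ * z) 0 := by
    intro z
    have h := (Real.hasDerivAt_log (x := 1 + δ * 0 * z) (by norm_num)).comp 0 (hlin z)
    simpa [Function.comp_def] using h
  have h := (((hlog b).const_mul c).sub ((hlog a).const_mul c)).exp
  simpa using h

/-- Under statistical QoS constraints with a constant-rate source,
the minimum energy per bit for confidential message transmission to receiver 1 satisfies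
`lim_{snr→0⁺} (δ·P(z1 ≥ z2)·snr)/C_E1(snr) = P(z1 ≥ z2)·log 2 / E[(z1 − z2)·1{z1 ≥ z2}]`. -/
theorem minimum_energy_per_bit_confidential_constant_rate
    {Ω : Type*} [MeasurableSpace Ω] (μ : Measure Ω) [IsProbabilityMeasure μ]
    (z1 z2 : Ω → ℝ) (hz1m : Measurable z1) (hz2m : Measurable z2)
    (hz1nn : ∀ ω, 0 ≤ z1 ω) (hz2nn : ∀ ω, 0 ≤ z2 ω)
    (M : ℝ) (hz1b : ∀ ω, z1 ω ≤ M) (hz2b : ∀ ω, z2 ω ≤ M)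
    (hpos : 0 < (μ {ω | z2 ω < z1 ω}).toReal)
    (θ δ : ℝ) (hθ : 0 < θ) (hδ0 : 0 < δ) (hδ1 : δ ≤ 1)
    (R1 : ℝ → Ω → ℝ)
    (hR1 : ∀ snr ω, R1 snr ω =
      if z2 ω ≤ z1 ω then
        Real.logb 2 ((1 + δ * snr * z1 ω) / (1 + δ * snr * z2 ω)) else 0)
    (g1 : ℝ → ℝ) (hg1 : ∀ snr, g1 snr = ∫ ω, Real.exp (-θ * R1 snr ω) ∂μ)
    (CE1 : ℝ → ℝ) (hCE1 : ∀ snr, CE1 snr = -(1 / θ) * Real.log (g1 snr)) :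
    Filter.Tendsto
      (fun snr => (δ * (μ {ω | z2 ω ≤ z1 ω}).toReal * snr) / CE1 snr)
      (nhdsWithin 0 (Set.Ioi 0))
      (nhds ((μ {ω | z2 ω ≤ z1 ω}).toReal * Real.log 2 /
        ∫ ω, (if z2 ω ≤ z1 ω then z1 ω - z2 ω else 0) ∂μ)) := by
  have hlog2 : (0:ℝ) < Real.log 2 := Real.log_pos one_lt_two
  -- basic facts
  have hΩ : Nonempty Ω := by
    by_contra h
    rw [not_nonempty_iff] at h
    have : μ {ω | z2 ω < z1 ω} = 0 := by simp [eq_empty_of_isEmpty]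
    simp [this] at hpos
  have hM0 : 0 ≤ M := le_trans (hz1nn (Classical.arbitrary Ω)) (hz1b _)
  set P : ℝ := (μ {ω | z2 ω ≤ z1 ω}).toReal with hP
  set I : ℝ := ∫ ω, (if z2 ω ≤ z1 ω then z1 ω - z2 ω else 0) ∂μ with hIdef
  set l : Filter ℝ := nhdsWithin 0 (Set.Ioi 0) with hl
  -- the indicator-difference function and its properties
  set q : Ω → ℝ := fun ω => if z2 ω ≤ z1 ω then z1 ω - z2 ω else 0 with hq
  have hqm : Measurable q := by
    apply Measurable.ite (measurableSet_le hz2m hz1m) (hz1m.sub hz2m) measurable_const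
  have hqnn : ∀ ω, 0 ≤ q ω := by
    intro ω; simp only [hq]; split
    · next h => linarith
    · rfl
  have hqb : ∀ ω, ‖q ω‖ ≤ M := by
    intro ω
    rw [Real.norm_eq_abs, abs_of_nonneg (hqnn ω)]
    simp only [hq]; split
    · have := hz2nn ω; have := hz1b ω; linarith
    · exact hM0
  have hqInt : Integrable q μ := by
    exact Integrable.mono' (integrable_const M) hqm.aestronglyMeasurable
      (Filter.Eventually.of_forall hqb)
  have hIpos : 0 < I := by
    rw [hIdef]
    rw [MeasureTheory.integral_pos_iff_support_of_nonneg_ae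
      (Filter.Eventually.of_forall hqnn) hqInt]
    have hsub : {ω | z2 ω < z1 ω} ⊆ Function.support q := by
      intro ω hω
      rw [Set.mem_setOf_eq] at hω
      simp only [Function.mem_support, hq, if_pos (le_of_lt hω)]
      exact sub_ne_zero_of_ne (ne_of_gt hω)
    have h0 : μ {ω | z2 ω < z1 ω} ≠ 0 := by
      intro h; rw [h] at hpos; simp at hpos
    calc (0:ENNReal) < μ {ω | z2 ω < z1 ω} := pos_iff_ne_zero.mpr h0
      _ ≤ μ (Function.support q) := measure_mono hsub
  -- the limit integrand
  set f : Ω → ℝ := fun ω => -(θ * δ / Real.log 2) * q ω with hf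
  set L : ℝ := -(θ * δ / Real.log 2) * I with hL
  have hfInt : (∫ ω, f ω ∂μ) = L := by
    rw [hf, hL, hIdef]
    exact MeasureTheory.integral_const_mul _ _
  have hLneg : L < 0 := by
    rw [hL]
    apply mul_neg_of_neg_of_pos _ hIpos
    have : 0 < θ * δ / Real.log 2 := by positivity
    linarith
  -- pointwise facts about R1 for s > 0
  have hR1nn : ∀ s : ℝ, 0 < s → ∀ ω, 0 ≤ R1 s ω := by
    intro s hs ω
    have e1 : 0 ≤ δ * s * z1 ω := mul_nonneg (mul_nonneg hδ0.le hs.le) (hz1nn ω)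
    have e2 : 0 ≤ δ * s * z2 ω := mul_nonneg (mul_nonneg hδ0.le hs.le) (hz2nn ω)
    rw [hR1]
    split
    · apply Real.logb_nonneg one_lt_two
      rw [le_div_iff₀ (by linarith)]
      have h12 : δ * s * z2 ω ≤ δ * s * z1 ω :=
        mul_le_mul_of_nonneg_left ‹z2 ω ≤ z1 ω› (mul_nonneg hδ0.le hs.le)
      linarith
    · rfl
  have hR1le : ∀ s : ℝ, 0 < s → ∀ ω, R1 s ω ≤ δ * s * M / Real.log 2 := by
    intro s hs ω
    have e1 : 0 ≤ δ * s * z1 ω := mul_nonneg (mul_nonneg hδ0.le hs.le) (hz1nn ω)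
    have e2 : 0 ≤ δ * s * z2 ω := mul_nonneg (mul_nonneg hδ0.le hs.le) (hz2nn ω)
    rw [hR1]
    split
    · rw [Real.logb]
      have h2 : (0:ℝ) < 1 + δ * s * z2 ω := by linarith
      have h1 : (0:ℝ) < 1 + δ * s * z1 ω := by linarith
      have hqle : (1 + δ * s * z1 ω) / (1 + δ * s * z2 ω) ≤ 1 + δ * s * z1 ω := by
        apply div_le_self (le_of_lt h1); linarith
      have key : Real.log ((1 + δ * s * z1 ω) / (1 + δ * s * z2 ω)) ≤ δ * s * M := by
        calc Real.log ((1 + δ * s * z1 ω) / (1 + δ * s * z2 ω))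
            ≤ Real.log (1 + δ * s * z1 ω) := Real.log_le_log (by positivity) hqle
          _ ≤ (1 + δ * s * z1 ω) - 1 := Real.log_le_sub_one_of_pos h1
          _ = δ * s * z1 ω := by ring
          _ ≤ δ * s * M :=
              mul_le_mul_of_nonneg_left (hz1b ω) (mul_nonneg hδ0.le hs.le)
      gcongr
    · positivity
  -- the difference-quotient family
  set F : ℝ → Ω → ℝ := fun s ω => (Real.exp (-θ * R1 s ω) - 1) / s with hF
  -- pointwise limit
  have hptwise : ∀ ω, Tendsto (fun s => F s ω) l (nhds (f ω)) := by
    intro ω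
    by_cases h : z2 ω ≤ z1 ω
    · set c : ℝ := θ / Real.log 2 with hc
      have hD0 := aux_hasDerivAt c δ (z1 ω) (z2 ω)
      set ε : ℝ := (δ * (M + 1))⁻¹ with hε
      have hεpos : 0 < ε := by positivity
      have hε_eq : δ * ε * (M + 1) = 1 := by
        rw [hε]; field_simp
      have hδε : 0 < δ * ε := by positivity
      have hposnbhd : ∀ s : ℝ, |s| < ε → ∀ z : ℝ, 0 ≤ z → z ≤ M → (0:ℝ) < 1 + δ * s * z := by
        intro s hs z h0 hM'
        have habs : |δ * s * z| < 1 := by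
          rw [abs_mul, abs_mul, abs_of_nonneg hδ0.le, abs_of_nonneg h0]
          have h1' : δ * |s| * z ≤ δ * |s| * M :=
            mul_le_mul_of_nonneg_left hM' (mul_nonneg hδ0.le (abs_nonneg s))
          have h2' : δ * |s| * M ≤ δ * ε * M := by
            have : δ * |s| ≤ δ * ε := mul_le_mul_of_nonneg_left hs.le hδ0.le
            exact mul_le_mul_of_nonneg_right this hM0
          nlinarith
        have := neg_abs_le (δ * s * z)
        linarith [abs_nonneg (δ * s * z), habs, this]
      have heq : (fun s : ℝ => Real.exp (-θ * R1 s ω)) =ᶠ[nhds 0]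
          (fun s : ℝ => Real.exp (c * Real.log (1 + δ * s * z2 ω) -
            c * Real.log (1 + δ * s * z1 ω))) := by
        have hev : ∀ᶠ s : ℝ in nhds 0, |s - 0| < ε := eventually_abs_sub_lt 0 hεpos
        filter_upwards [hev] with s hs
        rw [sub_zero] at hs
        have h1 : (0:ℝ) < 1 + δ * s * z1 ω := hposnbhd s hs _ (hz1nn ω) (hz1b ω)
        have h2 : (0:ℝ) < 1 + δ * s * z2 ω := hposnbhd s hs _ (hz2nn ω) (hz2b ω)
        rw [hR1, if_pos h]
        congr 1
        rw [Real.logb, Real.log_div h1.ne' h2.ne', hc]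
        field_simp
        ring
      have hD : HasDerivAt (fun s : ℝ => Real.exp (-θ * R1 s ω))
          (c * (δ * z2 ω) - c * (δ * z1 ω)) 0 := hD0.congr_of_eventuallyEq heq
      have hS := hasDerivAt_iff_tendsto_slope.mp hD
      have hmono : l ≤ nhdsWithin 0 {(0:ℝ)}ᶜ :=
        nhdsWithin_mono 0 (fun x hx => ne_of_gt hx)
      have hS' := hS.mono_left hmono
      have hR10 : R1 0 ω = 0 := by
        rw [hR1]; split <;> simp
      have hφ0 : Real.exp (-θ * R1 0 ω) = 1 := by rw [hR10]; simp
      have hfun : ∀ s : ℝ, slope (fun s : ℝ => Real.exp (-θ * R1 s ω)) 0 s = F s ω := by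
        intro s
        rw [slope_def_field, hφ0, hF, sub_zero]
      have hval : c * (δ * z2 ω) - c * (δ * z1 ω) = f ω := by
        rw [hf, hq]
        simp only [if_pos h, hc]
        ring
      rw [← hval]
      exact hS'.congr hfun
    · have hzero : ∀ s : ℝ, F s ω = 0 := by
        intro s
        rw [hF]
        simp [hR1, h]
      have hfz : f ω = 0 := by rw [hf, hq]; simp [h]
      rw [hfz]
      simp only [hzero]
      exact tendsto_const_nhds
  -- measurability
  have hR1meas : ∀ s : ℝ, Measurable (fun ω => R1 s ω) := by
    intro s
    have hfe : (fun ω => R1 s ω) = fun ω => if z2 ω ≤ z1 ω then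
        Real.logb 2 ((1 + δ * s * z1 ω) / (1 + δ * s * z2 ω)) else 0 := funext (hR1 s)
    rw [hfe]
    apply Measurable.ite (measurableSet_le hz2m hz1m) _ measurable_const
    simp only [Real.logb]
    exact (Real.measurable_log.comp
      ((measurable_const.add (hz1m.const_mul (δ * s))).div
        (measurable_const.add (hz2m.const_mul (δ * s))))).div_const _
  have hFmeas : ∀ s : ℝ, AEStronglyMeasurable (F s) μ := by
    intro s
    exact ((((hR1meas s).const_mul (-θ)).exp.sub measurable_const).div_const s).aestronglyMeasurable
  -- uniform bound
  have hB0 : (0:ℝ) ≤ θ * δ * M / Real.log 2 := by positivity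
  have hbound : ∀ᶠ s in l, ∀ᵐ ω ∂μ, ‖F s ω‖ ≤ θ * δ * M / Real.log 2 := by
    filter_upwards [eventually_mem_nhdsWithin] with s hs
    rw [Set.mem_Ioi] at hs
    refine Eventually.of_forall fun ω => ?_
    have hr0 := hR1nn s hs ω
    have hrle := hR1le s hs ω
    have hexp_le : Real.exp (-θ * R1 s ω) ≤ 1 := by
      rw [Real.exp_le_one_iff]
      nlinarith
    have hexp_ge : 1 - θ * R1 s ω ≤ Real.exp (-θ * R1 s ω) := by
      have h := Real.add_one_le_exp (-θ * R1 s ω)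
      linarith
    rw [hF]
    simp only
    rw [norm_div, Real.norm_eq_abs, Real.norm_eq_abs, abs_of_pos hs,
      abs_of_nonpos (by linarith : Real.exp (-θ * R1 s ω) - 1 ≤ 0)]
    rw [div_le_iff₀ hs]
    have h1 : θ * R1 s ω ≤ θ * (δ * s * M / Real.log 2) :=
      mul_le_mul_of_nonneg_left hrle hθ.le
    have h2 : θ * (δ * s * M / Real.log 2) = θ * δ * M / Real.log 2 * s := by ring
    linarith
  -- dominated convergence
  have hDCT : Tendsto (fun s => ∫ ω, F s ω ∂μ) l (nhds L) := by
    rw [← hfInt]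
    exact MeasureTheory.tendsto_integral_filter_of_dominated_convergence
      (fun _ => θ * δ * M / Real.log 2)
      (Eventually.of_forall hFmeas) hbound (integrable_const _)
      (Eventually.of_forall hptwise)
  -- relate to g1
  have hψInt : ∀ s : ℝ, 0 < s → Integrable (fun ω => Real.exp (-θ * R1 s ω)) μ := by
    intro s hs
    refine Integrable.mono' (integrable_const 1)
      (((hR1meas s).const_mul (-θ)).exp.aestronglyMeasurable)
      (Eventually.of_forall fun ω => ?_)
    rw [Real.norm_eq_abs, abs_of_pos (Real.exp_pos _), Real.exp_le_one_iff]
    have := hR1nn s hs ω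
    nlinarith
  have hkey : ∀ s : ℝ, 0 < s → (∫ ω, F s ω ∂μ) = (g1 s - 1) / s := by
    intro s hs
    rw [hg1, hF]
    rw [MeasureTheory.integral_div]
    congr 1
    rw [MeasureTheory.integral_sub (hψInt s hs) (integrable_const 1)]
    simp [measure_univ]
  have hA : Tendsto (fun s => (g1 s - 1) / s) l (nhds L) := by
    refine hDCT.congr' ?_
    filter_upwards [eventually_mem_nhdsWithin] with s hs
    exact hkey s hs
  -- g1 tends to 1
  have hsl : Tendsto (fun s : ℝ => s) l (nhds 0) := tendsto_id.mono_right nhdsWithin_le_nhds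
  have hg1lim : Tendsto g1 l (nhds 1) := by
    have h1 : Tendsto (fun s => 1 + s * ((g1 s - 1) / s)) l (nhds (1 + 0 * L)) :=
      tendsto_const_nhds.add (hsl.mul hA)
    rw [zero_mul, add_zero] at h1
    refine h1.congr' ?_
    filter_upwards [eventually_mem_nhdsWithin] with s hs
    rw [Set.mem_Ioi] at hs
    rw [mul_comm, div_mul_cancel₀ _ hs.ne']
    ring
  -- g1 is eventually below 1
  have hne1 : ∀ᶠ s in l, g1 s - 1 < 0 := by
    have h1 : ∀ᶠ s in l, (g1 s - 1) / s < 0 := hA.eventually_lt_const hLneg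
    filter_upwards [h1, eventually_mem_nhdsWithin] with s hlt hs
    rw [Set.mem_Ioi] at hs
    have := mul_neg_of_pos_of_neg hs hlt
    rw [mul_comm, div_mul_cancel₀ _ hs.ne'] at this
    exact this
  -- slope of log at 1
  have hlogslope : Tendsto (fun t => Real.log t / (t - 1)) (nhdsWithin 1 {(1:ℝ)}ᶜ) (nhds 1) := by
    have h1 := hasDerivAt_iff_tendsto_slope.mp (Real.hasDerivAt_log one_ne_zero)
    rw [inv_one] at h1
    refine h1.congr fun t => ?_
    rw [slope_def_field, Real.log_one, sub_zero]
  have hcomp : Tendsto (fun s => Real.log (g1 s) / (g1 s - 1)) l (nhds 1) := by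
    refine hlogslope.comp ?_
    rw [tendsto_nhdsWithin_iff]
    refine ⟨hg1lim, ?_⟩
    filter_upwards [hne1] with s hs
    simp only [Set.mem_compl_iff, Set.mem_singleton_iff]
    intro hcon
    rw [hcon] at hs
    norm_num at hs
  -- CE1 s / s limit
  have hCEval : -(1/θ) * (1 * L) = δ * I / Real.log 2 := by
    rw [hL]
    field_simp
  have hCEdiv : Tendsto (fun s => CE1 s / s) l (nhds (δ * I / Real.log 2)) := by
    have hmul : Tendsto (fun s => -(1/θ) * (Real.log (g1 s) / (g1 s - 1) * ((g1 s - 1) / s)))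
        l (nhds (-(1/θ) * (1 * L))) := tendsto_const_nhds.mul (hcomp.mul hA)
    rw [hCEval] at hmul
    refine hmul.congr' ?_
    filter_upwards [hne1, eventually_mem_nhdsWithin] with s hs1 hs2
    rw [Set.mem_Ioi] at hs2
    have hne : g1 s - 1 ≠ 0 := ne_of_lt hs1
    rw [hCE1]
    field_simp [hne, hs2.ne', hθ.ne']
  -- final assembly
  have hlimne : δ * I / Real.log 2 ≠ 0 := ne_of_gt (by positivity)
  have hfinal : Tendsto (fun s => (δ * P) / (CE1 s / s)) l
      (nhds ((δ * P) / (δ * I / Real.log 2))) :=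
    tendsto_const_nhds.div hCEdiv hlimne
  have hval2 : (δ * P) / (δ * I / Real.log 2) = P * Real.log 2 / I := by
    field_simp
  rw [hval2] at hfinal
  refine hfinal.congr fun s => ?_
  rw [div_div_eq_mul_div]
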